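/- The trace-norm geometric discord of a Bell-diagonal state with correlation vector (r₁,r₂,r₃), defined as the minimal trace distance to a classical-classical Bell-diagonal state, equals the intermediate value of {|r₁|, |r₂|, |r₃|}. -/

import Mathlib

open Matrix ComplexOrder Kronecker

/-- The Pauli matrices. -/
noncomputable def pauli : Fin 3 → Matrix (Fin 2) (Fin 2) ℂ :=
  ![!![0, 1; 1, 0], !![0, -Complex.I; Complex.I, 0], !![1, 0; 0, -1]]

/-- The Bell-diagonal state with correlation vector `r`. -/
noncomputable def BD (r : Fin 3 → ℝ) : Matrix (Fin 2 × Fin 2) (Fin 2 × Fin 2) ℂ :=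
  (1 / 4 : ℂ) • (1 + ∑ i : Fin 3, ((r i : ℝ) : ℂ) • (pauli i ⊗ₖ pauli i))

/-- The trace norm of a matrix: `‖A‖₁ = Tr √(AᴴA)`. -/
noncomputable def traceNorm {n : Type*} [Fintype n] [DecidableEq n]
    (A : Matrix n n ℂ) : ℝ :=
  (((Matrix.posSemidef_conjTranspose_mul_self A).1.eigenvectorUnitary.1 *
      diagonal (((↑) : ℝ → ℂ) ∘ (√·) ∘ (Matrix.posSemidef_conjTranspose_mul_self A).1.eigenvalues) *
      (star (Matrix.posSemidef_conjTranspose_mul_self A).1.eigenvectorUnitary : Matrix n n ℂ)).trace).re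

/-- The intermediate (median) value of three real numbers. -/
noncomputable def intermediate (a b c : ℝ) : ℝ :=
  max (min a b) (min (max a b) c)

/-! ### Auxiliary explicit matrices -/

noncomputable def Emat (s : Fin 3 → ℝ) : Matrix (Fin 2 × Fin 2) (Fin 2 × Fin 2) ℂ :=
  Matrix.of fun x y : Fin 2 × Fin 2 =>
    if x = (0,0) ∧ y = (0,0) then ((s 2 : ℝ) : ℂ)
    else if x = (1,1) ∧ y = (1,1) then ((s 2 : ℝ) : ℂ)
    else if x = (0,1) ∧ y = (0,1) then (-(s 2 : ℝ) : ℂ)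
    else if x = (1,0) ∧ y = (1,0) then (-(s 2 : ℝ) : ℂ)
    else if (x = (0,0) ∧ y = (1,1)) ∨ (x = (1,1) ∧ y = (0,0)) then ((s 0 - s 1 : ℝ) : ℂ)
    else if (x = (0,1) ∧ y = (1,0)) ∨ (x = (1,0) ∧ y = (0,1)) then ((s 0 + s 1 : ℝ) : ℂ)
    else 0

noncomputable def Smat (u v p q : ℝ) : Matrix (Fin 2 × Fin 2) (Fin 2 × Fin 2) ℂ :=
  Matrix.of fun x y : Fin 2 × Fin 2 =>
    if (x = (0,0) ∧ y = (0,0)) ∨ (x = (1,1) ∧ y = (1,1)) then (((u+v)/2 : ℝ) : ℂ)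
    else if (x = (0,0) ∧ y = (1,1)) ∨ (x = (1,1) ∧ y = (0,0)) then (((u-v)/2 : ℝ) : ℂ)
    else if (x = (0,1) ∧ y = (0,1)) ∨ (x = (1,0) ∧ y = (1,0)) then (((p+q)/2 : ℝ) : ℂ)
    else if (x = (0,1) ∧ y = (1,0)) ∨ (x = (1,0) ∧ y = (0,1)) then (((p-q)/2 : ℝ) : ℂ)
    else 0

noncomputable def wr : Fin 4 → Matrix (Fin 1) (Fin 2 × Fin 2) ℂ
  | 0 => Matrix.of fun _ y => if y = (0,0) ∨ y = (1,1) then 1 else 0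
  | 1 => Matrix.of fun _ y => if y = (0,0) then 1 else if y = (1,1) then -1 else 0
  | 2 => Matrix.of fun _ y => if y = (0,1) ∨ y = (1,0) then 1 else 0
  | 3 => Matrix.of fun _ y => if y = (0,1) then 1 else if y = (1,0) then -1 else 0

set_option maxHeartbeats 1000000 in
lemma sum_pauli_eq (s : Fin 3 → ℝ) :
    ∑ i : Fin 3, ((s i : ℝ) : ℂ) • (pauli i ⊗ₖ pauli i) = Emat s := by
  ext ⟨a,b⟩ ⟨c,d⟩
  fin_cases a <;> fin_cases b <;> fin_cases c <;> fin_cases d <;>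
    · simp only [Matrix.sum_apply, Matrix.smul_apply, Matrix.kroneckerMap_apply, pauli,
        Fin.sum_univ_three, Emat, Matrix.of_apply, Matrix.cons_val_zero, Matrix.cons_val_one,
        Matrix.cons_val_two, Matrix.head_cons, Matrix.tail_cons]
      norm_num [Prod.ext_iff]
      try ring_nf

set_option maxHeartbeats 1000000 in
lemma Emat_herm (s : Fin 3 → ℝ) : (Emat s).IsHermitian := by
  unfold Matrix.IsHermitian
  ext ⟨a,b⟩ ⟨c,d⟩
  fin_cases a <;> fin_cases b <;> fin_cases c <;> fin_cases d <;>
    · simp only [Emat, Matrix.conjTranspose_apply, Matrix.of_apply]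
      norm_num [Prod.ext_iff]

set_option maxHeartbeats 2000000 in
lemma Smat_sq (s : Fin 3 → ℝ) (u v p q : ℝ)
    (hu : u^2 = (s 0 - s 1 + s 2)^2) (hv : v^2 = (s 0 - s 1 - s 2)^2)
    (hp : p^2 = (s 0 + s 1 - s 2)^2) (hq : q^2 = (s 0 + s 1 + s 2)^2) :
    Smat u v p q * Smat u v p q = Emat s * Emat s := by
  have hu' : ((u:ℂ))^2 = (((s 0 - s 1 + s 2 : ℝ)):ℂ)^2 := by
    exact_mod_cast congrArg (Complex.ofReal) hu
  have hv' : ((v:ℂ))^2 = (((s 0 - s 1 - s 2 : ℝ)):ℂ)^2 := by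
    exact_mod_cast congrArg (Complex.ofReal) hv
  have hp' : ((p:ℂ))^2 = (((s 0 + s 1 - s 2 : ℝ)):ℂ)^2 := by
    exact_mod_cast congrArg (Complex.ofReal) hp
  have hq' : ((q:ℂ))^2 = (((s 0 + s 1 + s 2 : ℝ)):ℂ)^2 := by
    exact_mod_cast congrArg (Complex.ofReal) hq
  push_cast at hu' hv' hp' hq'
  ext ⟨a,b⟩ ⟨c,d⟩
  fin_cases a <;> fin_cases b <;> fin_cases c <;> fin_cases d <;>
    · simp only [Smat, Emat, Matrix.mul_apply, Matrix.of_apply, Fintype.sum_prod_type,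
        Fin.sum_univ_two]
      norm_num [Prod.ext_iff]
      try (ring_nf; simp only [hu', hv', hp', hq']; ring_nf)

lemma psd_ofReal_smul {n : Type*} [Fintype n] {M : Matrix n n ℂ} (hM : M.PosSemidef)
    {c : ℝ} (hc : 0 ≤ c) : ((c : ℂ) • M).PosSemidef := by
  constructor
  · unfold Matrix.IsHermitian
    rw [conjTranspose_smul, hM.1.eq]
    norm_num
  · exact (hM.smul (a := (c : ℂ)) (Complex.zero_le_real.mpr hc)).2

set_option maxHeartbeats 1000000 in
lemma Smat_decomp (u v p q : ℝ) :
    Smat u v p q = ((u/2 : ℝ) : ℂ) • ((wr 0)ᴴ * wr 0) + ((v/2 : ℝ) : ℂ) • ((wr 1)ᴴ * wr 1)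
      + ((p/2 : ℝ) : ℂ) • ((wr 2)ᴴ * wr 2) + ((q/2 : ℝ) : ℂ) • ((wr 3)ᴴ * wr 3) := by
  ext ⟨a,b⟩ ⟨c,d⟩
  fin_cases a <;> fin_cases b <;> fin_cases c <;> fin_cases d <;>
    · simp only [Smat, wr, Matrix.add_apply, Matrix.smul_apply, Matrix.mul_apply,
        Matrix.conjTranspose_apply, Matrix.of_apply, Fin.sum_univ_one, Finset.univ_unique]
      norm_num [Prod.ext_iff]
      try ring_nf

lemma Smat_psd (u v p q : ℝ) (hu : 0 ≤ u) (hv : 0 ≤ v) (hp : 0 ≤ p) (hq : 0 ≤ q) :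
    (Smat u v p q).PosSemidef := by
  rw [Smat_decomp]
  exact (((psd_ofReal_smul (posSemidef_conjTranspose_mul_self _) (by linarith)).add
    (psd_ofReal_smul (posSemidef_conjTranspose_mul_self _) (by linarith))).add
    (psd_ofReal_smul (posSemidef_conjTranspose_mul_self _) (by linarith))).add
    (psd_ofReal_smul (posSemidef_conjTranspose_mul_self _) (by linarith))

lemma Smat_trace (u v p q : ℝ) : (Smat u v p q).trace = ((u + v + p + q : ℝ) : ℂ) := by
  simp only [Matrix.trace, Matrix.diag, Fintype.sum_prod_type, Fin.sum_univ_two, Smat,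
    Matrix.of_apply]
  norm_num [Prod.ext_iff]
  ring

/-- The trace norm of `Emat s`. -/
lemma traceNorm_Emat (s : Fin 3 → ℝ) :
    traceNorm (Emat s) =
      |s 0 - s 1 + s 2| + |s 0 - s 1 - s 2| + |s 0 + s 1 - s 2| + |s 0 + s 1 + s 2| := by
  set u := |s 0 - s 1 + s 2|
  set v := |s 0 - s 1 - s 2|
  set p := |s 0 + s 1 - s 2|
  set q := |s 0 + s 1 + s 2|
  have hsq : Smat u v p q ^ 2 = (Emat s)ᴴ * Emat s := by
    rw [pow_two, (Emat_herm s).eq, Smat_sq s u v p q (sq_abs _) (sq_abs _) (sq_abs _) (sq_abs _)]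
  have hS := Smat_psd u v p q (abs_nonneg _) (abs_nonneg _) (abs_nonneg _) (abs_nonneg _)
  have heq : Smat u v p q = (Matrix.posSemidef_conjTranspose_mul_self (Emat s)).1.cfc Real.sqrt := by
    open scoped MatrixOrder in
    rw [← IsHermitian.cfc_eq, ← cfcₙ_eq_cfc, ← CFC.sqrt_eq_real_sqrt _
      (Matrix.posSemidef_conjTranspose_mul_self (Emat s)).nonneg]
    exact (CFC.sqrt_unique (by rw [← pow_two]; exact hsq) hS.nonneg).symm
  rw [show traceNorm (Emat s) = (((Matrix.posSemidef_conjTranspose_mul_self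
    (Emat s)).1.cfc Real.sqrt).trace).re from rfl, ← heq, Smat_trace]
  norm_num

lemma BD_sub (r c : Fin 3 → ℝ) :
    BD r - BD c = Emat (fun i => (r i - c i) / 4) := by
  rw [BD, BD, sum_pauli_eq, sum_pauli_eq]
  ext ⟨a,b⟩ ⟨x,y⟩
  fin_cases a <;> fin_cases b <;> fin_cases x <;> fin_cases y <;>
    · simp only [Matrix.sub_apply, Matrix.smul_apply, Matrix.add_apply, Matrix.one_apply,
        Emat, Matrix.of_apply]
      norm_num [Prod.ext_iff]
      try (push_cast; ring)

lemma traceNorm_BD_sub (r c : Fin 3 → ℝ) :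
    traceNorm (BD r - BD c) =
      (|(r 0 - c 0) - (r 1 - c 1) + (r 2 - c 2)| + |(r 0 - c 0) - (r 1 - c 1) - (r 2 - c 2)|
        + |(r 0 - c 0) + (r 1 - c 1) - (r 2 - c 2)|
        + |(r 0 - c 0) + (r 1 - c 1) + (r 2 - c 2)|) / 4 := by
  rw [BD_sub, traceNorm_Emat]
  have h : ∀ x : ℝ, |x / 4| = |x| / 4 := by
    intro x; rw [abs_div]; norm_num
  rw [show (r 0 - c 0)/4 - (r 1 - c 1)/4 + (r 2 - c 2)/4
      = ((r 0 - c 0) - (r 1 - c 1) + (r 2 - c 2))/4 by ring,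
    show (r 0 - c 0)/4 - (r 1 - c 1)/4 - (r 2 - c 2)/4
      = ((r 0 - c 0) - (r 1 - c 1) - (r 2 - c 2))/4 by ring,
    show (r 0 - c 0)/4 + (r 1 - c 1)/4 - (r 2 - c 2)/4
      = ((r 0 - c 0) + (r 1 - c 1) - (r 2 - c 2))/4 by ring,
    show (r 0 - c 0)/4 + (r 1 - c 1)/4 + (r 2 - c 2)/4
      = ((r 0 - c 0) + (r 1 - c 1) + (r 2 - c 2))/4 by ring,
    h, h, h, h]
  ring

lemma BD_constraints (r : Fin 3 → ℝ) (hr : (BD r).PosSemidef) :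
    |r 0| ≤ 1 ∧ |r 1| ≤ 1 ∧ |r 2| ≤ 1 := by
  have hBD : BD r = (1 / 4 : ℂ) • (1 + Emat r) := by rw [BD, sum_pauli_eq]
  have e1 := hr.dotProduct_mulVec_nonneg (fun y => if y = ((0:Fin 2),(0:Fin 2)) then 1 else if y = (1,1) then 1 else 0)
  have e2 := hr.dotProduct_mulVec_nonneg (fun y => if y = ((0:Fin 2),(0:Fin 2)) then 1 else if y = (1,1) then -1 else 0)
  have e3 := hr.dotProduct_mulVec_nonneg (fun y => if y = ((0:Fin 2),(1:Fin 2)) then 1 else if y = (1,0) then 1 else 0)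
  have e4 := hr.dotProduct_mulVec_nonneg (fun y => if y = ((0:Fin 2),(1:Fin 2)) then 1 else if y = (1,0) then -1 else 0)
  rw [hBD] at e1 e2 e3 e4
  simp only [Matrix.mulVec, dotProduct, Fintype.sum_prod_type, Fin.sum_univ_two,
    Matrix.smul_apply, Matrix.add_apply, Matrix.one_apply, Emat, Matrix.of_apply,
    Pi.star_apply, Prod.ext_iff] at e1 e2 e3 e4
  norm_num [Prod.ext_iff, Complex.le_def] at e1 e2 e3 e4
  refine ⟨abs_le.2 ⟨by linarith, by linarith⟩, abs_le.2 ⟨by linarith, by linarith⟩,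
    abs_le.2 ⟨by linarith, by linarith⟩⟩

set_option maxHeartbeats 1000000 in
lemma BD_axis0_decomp (t : ℝ) : BD ![t,0,0]
    = (((1+t)/8 : ℝ):ℂ) • ((wr 0)ᴴ * wr 0) + (((1-t)/8:ℝ):ℂ) • ((wr 1)ᴴ * wr 1)
      + (((1+t)/8:ℝ):ℂ) • ((wr 2)ᴴ * wr 2) + (((1-t)/8:ℝ):ℂ) • ((wr 3)ᴴ * wr 3) := by
  rw [BD, sum_pauli_eq]
  ext ⟨a,b⟩ ⟨c,d⟩
  fin_cases a <;> fin_cases b <;> fin_cases c <;> fin_cases d <;>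
    · simp only [Matrix.add_apply, Matrix.smul_apply, Matrix.mul_apply,
        Matrix.conjTranspose_apply, Matrix.of_apply, Fin.sum_univ_one, Finset.univ_unique,
        Matrix.one_apply, Emat, wr]
      norm_num [Prod.ext_iff]
      try (push_cast; ring)

set_option maxHeartbeats 1000000 in
lemma BD_axis1_decomp (t : ℝ) : BD ![0,t,0]
    = (((1-t)/8 : ℝ):ℂ) • ((wr 0)ᴴ * wr 0) + (((1+t)/8:ℝ):ℂ) • ((wr 1)ᴴ * wr 1)
      + (((1+t)/8:ℝ):ℂ) • ((wr 2)ᴴ * wr 2) + (((1-t)/8:ℝ):ℂ) • ((wr 3)ᴴ * wr 3) := by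
  rw [BD, sum_pauli_eq]
  ext ⟨a,b⟩ ⟨c,d⟩
  fin_cases a <;> fin_cases b <;> fin_cases c <;> fin_cases d <;>
    · simp only [Matrix.add_apply, Matrix.smul_apply, Matrix.mul_apply,
        Matrix.conjTranspose_apply, Matrix.of_apply, Fin.sum_univ_one, Finset.univ_unique,
        Matrix.one_apply, Emat, wr]
      norm_num [Prod.ext_iff]
      try (push_cast; ring)

set_option maxHeartbeats 1000000 in
lemma BD_axis2_decomp (t : ℝ) : BD ![0,0,t]
    = (((1+t)/8 : ℝ):ℂ) • ((wr 0)ᴴ * wr 0) + (((1+t)/8:ℝ):ℂ) • ((wr 1)ᴴ * wr 1)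
      + (((1-t)/8:ℝ):ℂ) • ((wr 2)ᴴ * wr 2) + (((1-t)/8:ℝ):ℂ) • ((wr 3)ᴴ * wr 3) := by
  rw [BD, sum_pauli_eq]
  ext ⟨a,b⟩ ⟨c,d⟩
  fin_cases a <;> fin_cases b <;> fin_cases c <;> fin_cases d <;>
    · simp only [Matrix.add_apply, Matrix.smul_apply, Matrix.mul_apply,
        Matrix.conjTranspose_apply, Matrix.of_apply, Fin.sum_univ_one, Finset.univ_unique,
        Matrix.one_apply, Emat, wr]
      norm_num [Prod.ext_iff]
      try (push_cast; ring)

lemma BD_axis0_psd {t : ℝ} (h : |t| ≤ 1) : (BD ![t,0,0]).PosSemidef := by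
  rw [BD_axis0_decomp]
  rw [abs_le] at h
  exact (((psd_ofReal_smul (posSemidef_conjTranspose_mul_self _) (by linarith)).add
    (psd_ofReal_smul (posSemidef_conjTranspose_mul_self _) (by linarith))).add
    (psd_ofReal_smul (posSemidef_conjTranspose_mul_self _) (by linarith))).add
    (psd_ofReal_smul (posSemidef_conjTranspose_mul_self _) (by linarith))

lemma BD_axis1_psd {t : ℝ} (h : |t| ≤ 1) : (BD ![0,t,0]).PosSemidef := by
  rw [BD_axis1_decomp]
  rw [abs_le] at h
  exact (((psd_ofReal_smul (posSemidef_conjTranspose_mul_self _) (by linarith)).add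
    (psd_ofReal_smul (posSemidef_conjTranspose_mul_self _) (by linarith))).add
    (psd_ofReal_smul (posSemidef_conjTranspose_mul_self _) (by linarith))).add
    (psd_ofReal_smul (posSemidef_conjTranspose_mul_self _) (by linarith))

lemma BD_axis2_psd {t : ℝ} (h : |t| ≤ 1) : (BD ![0,0,t]).PosSemidef := by
  rw [BD_axis2_decomp]
  rw [abs_le] at h
  exact (((psd_ofReal_smul (posSemidef_conjTranspose_mul_self _) (by linarith)).add
    (psd_ofReal_smul (posSemidef_conjTranspose_mul_self _) (by linarith))).add
    (psd_ofReal_smul (posSemidef_conjTranspose_mul_self _) (by linarith))).add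
    (psd_ofReal_smul (posSemidef_conjTranspose_mul_self _) (by linarith))

/-! ### real arithmetic helpers -/

lemma int_le01 (a b c : ℝ) : intermediate a b c ≤ max a b := by
  simp only [intermediate, max_def, min_def]; split_ifs <;> linarith
lemma int_le02 (a b c : ℝ) : intermediate a b c ≤ max a c := by
  simp only [intermediate, max_def, min_def]; split_ifs <;> linarith
lemma int_le12 (a b c : ℝ) : intermediate a b c ≤ max b c := by
  simp only [intermediate, max_def, min_def]; split_ifs <;> linarith
lemma int_eq2 (a b c : ℝ) (h1 : a ≤ c) (h2 : b ≤ c) : intermediate a b c = max a b := by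
  simp only [intermediate, max_def, min_def]; split_ifs <;> linarith
lemma int_eq1 (a b c : ℝ) (h1 : a ≤ b) (h2 : c ≤ b) : intermediate a b c = max a c := by
  simp only [intermediate, max_def, min_def]; split_ifs <;> linarith
lemma int_eq0 (a b c : ℝ) (h1 : b ≤ a) (h2 : c ≤ a) : intermediate a b c = max b c := by
  simp only [intermediate, max_def, min_def]; split_ifs <;> linarith

lemma habs (x y : ℝ) : |x + y| + |x - y| = 2 * max |x| |y| := by
  rcases abs_cases (x + y) with ⟨h1, _⟩ | ⟨h1, _⟩ <;>
  rcases abs_cases (x - y) with ⟨h2, _⟩ | ⟨h2, _⟩ <;>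
  rcases abs_cases x with ⟨h3, _⟩ | ⟨h3, _⟩ <;>
  rcases abs_cases y with ⟨h4, _⟩ | ⟨h4, _⟩ <;>
  rcases max_cases |x| |y| with ⟨h5, _⟩ | ⟨h5, _⟩ <;>
  linarith

lemma pair_lb (a x : ℝ) : 2 * |a| ≤ |a + x| + |a - x| := by
  have h := abs_add_le (a + x) (a - x)
  rw [show a + x + (a - x) = 2 * a by ring] at h
  rw [show |2 * a| = 2 * |a| by rw [abs_mul]; norm_num] at h
  exact h

/-! ### Main theorem -/

theorem traceNorm_discord_BD (r : Fin 3 → ℝ) (hr : (BD r).PosSemidef) :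
    IsLeast
      {t : ℝ | ∃ c : Fin 3 → ℝ, (BD c).PosSemidef ∧
        ((c 1 = 0 ∧ c 2 = 0) ∨ (c 0 = 0 ∧ c 2 = 0) ∨ (c 0 = 0 ∧ c 1 = 0)) ∧
        t = traceNorm (BD r - BD c)}
      (intermediate |r 0| |r 1| |r 2|) := by
  obtain ⟨hr0, hr1, hr2⟩ := BD_constraints r hr
  constructor
  · -- membership
    rcases le_total |r 1| |r 2| with h12 | h12
    · rcases le_total |r 0| |r 2| with h02 | h02
      · -- axis 2 : |r 2| is largest
        refine ⟨![0,0,r 2], BD_axis2_psd hr2, Or.inr (Or.inr ⟨by simp, by simp⟩), ?_⟩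
        rw [traceNorm_BD_sub]
        simp only [Matrix.cons_val_zero, Matrix.cons_val_one, Matrix.head_cons,
          Matrix.cons_val_two, Matrix.tail_cons, sub_zero, sub_self, add_zero]
        rw [int_eq2 _ _ _ h02 h12]
        have h := habs (r 0) (r 1)
        have h2 : |r 0 - r 1| = |r 0 - r 1| := rfl
        rcases max_cases |r 0| |r 1| with ⟨hm, _⟩ | ⟨hm, _⟩ <;> linarith
      · -- axis 0 : |r 0| is largest
        refine ⟨![r 0,0,0], BD_axis0_psd hr0, Or.inl ⟨by simp, by simp⟩, ?_⟩
        rw [traceNorm_BD_sub]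
        simp only [Matrix.cons_val_zero, Matrix.cons_val_one, Matrix.head_cons,
          Matrix.cons_val_two, Matrix.tail_cons, sub_zero, sub_self]
        rw [int_eq0 _ _ _ (le_trans h12 h02) h02]
        have e1 : |0 - r 1 + r 2| = |r 1 - r 2| := by
          rw [show (0:ℝ) - r 1 + r 2 = -(r 1 - r 2) by ring, abs_neg]
        have e2 : |0 - r 1 - r 2| = |r 1 + r 2| := by
          rw [show (0:ℝ) - r 1 - r 2 = -(r 1 + r 2) by ring, abs_neg]
        have e3 : |0 + r 1 - r 2| = |r 1 - r 2| := by rw [zero_add]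
        have e4 : |0 + r 1 + r 2| = |r 1 + r 2| := by rw [zero_add]
        have h := habs (r 1) (r 2)
        rcases max_cases |r 1| |r 2| with ⟨hm, _⟩ | ⟨hm, _⟩ <;> linarith
    · rcases le_total |r 0| |r 1| with h01 | h01
      · -- axis 1 : |r 1| is largest
        refine ⟨![0,r 1,0], BD_axis1_psd hr1, Or.inr (Or.inl ⟨by simp, by simp⟩), ?_⟩
        rw [traceNorm_BD_sub]
        simp only [Matrix.cons_val_zero, Matrix.cons_val_one, Matrix.head_cons,
          Matrix.cons_val_two, Matrix.tail_cons, sub_zero, sub_self, add_zero]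
        rw [int_eq1 _ _ _ h01 h12]
        have e1 : |r 0 - 0 + r 2| = |r 0 + r 2| := by rw [sub_zero]
        have e2 : |r 0 - 0 - r 2| = |r 0 - r 2| := by rw [sub_zero]
        have e3 : |r 0 + 0 - r 2| = |r 0 - r 2| := by rw [add_zero]
        have e4 : |r 0 + 0 + r 2| = |r 0 + r 2| := by rw [add_zero]
        have h := habs (r 0) (r 2)
        rcases max_cases |r 0| |r 2| with ⟨hm, _⟩ | ⟨hm, _⟩ <;> linarith
      · -- axis 0 : |r 0| is largest
        refine ⟨![r 0,0,0], BD_axis0_psd hr0, Or.inl ⟨by simp, by simp⟩, ?_⟩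
        rw [traceNorm_BD_sub]
        simp only [Matrix.cons_val_zero, Matrix.cons_val_one, Matrix.head_cons,
          Matrix.cons_val_two, Matrix.tail_cons, sub_zero, sub_self]
        rw [int_eq0 _ _ _ h01 (le_trans h12 h01)]
        have e1 : |0 - r 1 + r 2| = |r 1 - r 2| := by
          rw [show (0:ℝ) - r 1 + r 2 = -(r 1 - r 2) by ring, abs_neg]
        have e2 : |0 - r 1 - r 2| = |r 1 + r 2| := by
          rw [show (0:ℝ) - r 1 - r 2 = -(r 1 + r 2) by ring, abs_neg]
        have e3 : |0 + r 1 - r 2| = |r 1 - r 2| := by rw [zero_add]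
        have e4 : |0 + r 1 + r 2| = |r 1 + r 2| := by rw [zero_add]
        have h := habs (r 1) (r 2)
        rcases max_cases |r 1| |r 2| with ⟨hm, _⟩ | ⟨hm, _⟩ <;> linarith
  · -- lower bound
    rintro t ⟨c, _, hax, rfl⟩
    rw [traceNorm_BD_sub]
    rcases hax with ⟨hc1, hc2⟩ | ⟨hc0, hc2⟩ | ⟨hc0, hc1⟩
    · -- axis 0 : c 1 = c 2 = 0
      rw [hc1, hc2]
      set x := r 0 - c 0 with hx
      simp only [sub_zero]
      have e1 : |x - r 1 + r 2| = |r 2 - r 1 + x| := by rw [show x - r 1 + r 2 = r 2 - r 1 + x by ring]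
      have e2 : |x + r 1 - r 2| = |r 2 - r 1 - x| := by
        rw [show x + r 1 - r 2 = -(r 2 - r 1 - x) by ring, abs_neg]
      have e3 : |x + r 1 + r 2| = |r 1 + r 2 + x| := by rw [show x + r 1 + r 2 = r 1 + r 2 + x by ring]
      have e4 : |x - r 1 - r 2| = |r 1 + r 2 - x| := by
        rw [show x - r 1 - r 2 = -(r 1 + r 2 - x) by ring, abs_neg]
      have p1 := pair_lb (r 2 - r 1) x
      have p2 := pair_lb (r 1 + r 2) x
      have h := habs (r 1) (r 2)
      have hi := int_le12 |r 0| |r 1| |r 2|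
      have hsub : |r 2 - r 1| = |r 1 - r 2| := abs_sub_comm _ _
      rcases max_cases |r 1| |r 2| with ⟨hm, _⟩ | ⟨hm, _⟩ <;> linarith
    · -- axis 1 : c 0 = c 2 = 0
      rw [hc0, hc2]
      set x := r 1 - c 1 with hx
      simp only [sub_zero]
      have e1 : |r 0 - x + r 2| = |r 0 + r 2 - x| := by rw [show r 0 - x + r 2 = r 0 + r 2 - x by ring]
      have e2 : |r 0 + x + r 2| = |r 0 + r 2 + x| := by rw [show r 0 + x + r 2 = r 0 + r 2 + x by ring]
      have e3 : |r 0 - x - r 2| = |r 0 - r 2 - x| := by rw [show r 0 - x - r 2 = r 0 - r 2 - x by ring]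
      have e4 : |r 0 + x - r 2| = |r 0 - r 2 + x| := by rw [show r 0 + x - r 2 = r 0 - r 2 + x by ring]
      have p1 := pair_lb (r 0 + r 2) x
      have p2 := pair_lb (r 0 - r 2) x
      have h := habs (r 0) (r 2)
      have hi := int_le02 |r 0| |r 1| |r 2|
      rcases max_cases |r 0| |r 2| with ⟨hm, _⟩ | ⟨hm, _⟩ <;> linarith
    · -- axis 2 : c 0 = c 1 = 0
      rw [hc0, hc1]
      set x := r 2 - c 2 with hx
      simp only [sub_zero]
      have e1 : |r 0 - r 1 + x| = |r 0 - r 1 + x| := rfl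
      have e2 : |r 0 - r 1 - x| = |r 0 - r 1 - x| := rfl
      have e3 : |r 0 + r 1 - x| = |r 0 + r 1 - x| := rfl
      have p1 := pair_lb (r 0 - r 1) x
      have p2 := pair_lb (r 0 + r 1) x
      have h := habs (r 0) (r 1)
      have hi := int_le01 |r 0| |r 1| |r 2|
      rcases max_cases |r 0| |r 1| with ⟨hm, _⟩ | ⟨hm, _⟩ <;> linarith
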